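/- We have φ(e^{-9π}) / φ(e^{-π}) = (1 + (2(√3 + 1))^{1/3}) / 3. -/

import Mathlib

open Real

/-- Ramanujan's theta function `φ(q) = ∑_{n=-∞}^{∞} q^{n²}`. -/
noncomputable def phi (q : ℝ) : ℝ := ∑' n : ℤ, q ^ (n ^ 2)

namespace Rama

lemma zpow_sq_eq (q : ℝ) (n : ℤ) : q ^ (n ^ 2) = q ^ (n.natAbs ^ 2) := by
  have h : (n ^ 2 : ℤ) = ((n.natAbs ^ 2 : ℕ) : ℤ) := by
    push_cast [Int.natAbs_sq]
    rw [sq_abs]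
  rw [h, zpow_natCast]

lemma summable_base {q : ℝ} (hq0 : 0 ≤ q) (hq1 : q < 1) :
    Summable (fun n : ℤ => q ^ (n ^ 2)) := by
  have key : Summable (fun n : ℤ => q ^ (n.natAbs)) := by
    apply Summable.of_nat_of_neg <;> simpa using summable_geometric_of_lt_one hq0 hq1
  refine Summable.of_nonneg_of_le (fun n => by rw [zpow_sq_eq]; positivity)
    (fun n => ?_) key
  rw [zpow_sq_eq]
  exact pow_le_pow_of_le_one hq0 hq1.le (Nat.le_self_pow two_ne_zero _)

lemma phi_nonneg {q : ℝ} (hq0 : 0 ≤ q) : 0 ≤ phi q :=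
  tsum_nonneg fun n => by rw [zpow_sq_eq]; positivity

lemma one_le_phi {q : ℝ} (hq0 : 0 ≤ q) (hq1 : q < 1) : 1 ≤ phi q := by
  have := Summable.le_tsum (summable_base hq0 hq1) 0
    (fun j _ => by rw [zpow_sq_eq]; positivity)
  simpa [phi] using this

lemma phi_pos {q : ℝ} (hq0 : 0 ≤ q) (hq1 : q < 1) : 0 < phi q :=
  lt_of_lt_of_le one_pos (one_le_phi hq0 hq1)

open scoped ENNReal

abbrev V := ℤ × ℤ × ℤ × ℤ

lemma tsum_mul2 {α β : Type*} (f : α → ℝ≥0∞) (g : β → ℝ≥0∞) :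
    ∑' p : α × β, f p.1 * g p.2 = (∑' a, f a) * ∑' b, g b := by
  rw [ENNReal.tsum_prod']
  simp_rw [ENNReal.tsum_mul_left]
  rw [ENNReal.tsum_mul_right]

lemma tsum_mul4 (f g h k : ℤ → ℝ≥0∞) :
    ∑' y : V, f y.1 * g y.2.1 * h y.2.2.1 * k y.2.2.2
      = (∑' n, f n) * (∑' n, g n) * (∑' n, h n) * (∑' n, k n) := by
  have h1 : ∑' y : V, f y.1 * g y.2.1 * h y.2.2.1 * k y.2.2.2
      = ∑' y : V, f y.1 * ((fun p : ℤ × ℤ × ℤ => g p.1 * ((fun r : ℤ × ℤ => h r.1 * k r.2) p.2)) y.2) :=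
    tsum_congr fun y => by simp only []; ring
  rw [h1, tsum_mul2 f (fun p : ℤ × ℤ × ℤ => g p.1 * ((fun r : ℤ × ℤ => h r.1 * k r.2) p.2)),
    tsum_mul2 g (fun r : ℤ × ℤ => h r.1 * k r.2), tsum_mul2 h k]
  ring

lemma tsum_of_inj {γ : Type*} {T : γ → γ} (hT : Function.Injective T) (F : γ → ℝ≥0∞)
    (hsupp : ∀ y, F y ≠ 0 → y ∈ Set.range T) : ∑' x, F (T x) = ∑' y, F y := by
  rw [← tsum_range F hT]
  exact tsum_subtype_eq_of_support_subset fun y hy => hsupp y hy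


abbrev Z3 := ZMod 3
abbrev W3 := Z3 × Z3 × Z3 × Z3

def c1z (w : W3) : Prop :=
  w.1 + w.2.1 + w.2.2.1 = 0 ∧ w.1 - w.2.1 + w.2.2.2 = 0 ∧
  w.1 - w.2.2.1 - w.2.2.2 = 0 ∧ w.2.1 - w.2.2.1 + w.2.2.2 = 0

instance : DecidablePred c1z := fun w => by unfold c1z; infer_instance

def d2 (w : W3) : W3 := (w.1, w.2.1, -w.2.2.1, -w.2.2.2)
def d3 (w : W3) : W3 := (w.1, -w.2.1, -w.2.2.1, w.2.2.2)
def d4 (w : W3) : W3 := (w.1, -w.2.1, w.2.2.1, -w.2.2.2)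

def e1z (w : W3) : Prop := w.1 = 0 ∧ w.2.1 ≠ 0 ∧ w.2.2.1 ≠ 0 ∧ w.2.2.2 ≠ 0
def e2z (w : W3) : Prop := w.1 ≠ 0 ∧ w.2.1 = 0 ∧ w.2.2.1 ≠ 0 ∧ w.2.2.2 ≠ 0
def e3z (w : W3) : Prop := w.1 ≠ 0 ∧ w.2.1 ≠ 0 ∧ w.2.2.1 = 0 ∧ w.2.2.2 ≠ 0
def e4z (w : W3) : Prop := w.1 ≠ 0 ∧ w.2.1 ≠ 0 ∧ w.2.2.1 ≠ 0 ∧ w.2.2.2 = 0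
def zz (w : W3) : Prop := w.1 = 0 ∧ w.2.1 = 0 ∧ w.2.2.1 = 0 ∧ w.2.2.2 = 0

instance : DecidablePred e1z := fun w => by unfold e1z; infer_instance
instance : DecidablePred e2z := fun w => by unfold e2z; infer_instance
instance : DecidablePred e3z := fun w => by unfold e3z; infer_instance
instance : DecidablePred e4z := fun w => by unfold e4z; infer_instance
instance : DecidablePred zz := fun w => by unfold zz; infer_instance

open Classical in
lemma count_lemma : ∀ w : W3,
    ((if c1z w then 1 else 0) + (if c1z (d2 w) then 1 else 0)
      + (if c1z (d3 w) then 1 else 0) + (if c1z (d4 w) then 1 else 0) : ℕ)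
    = (if e1z w then 1 else 0) + (if e2z w then 1 else 0)
      + (if e3z w then 1 else 0) + (if e4z w then 1 else 0) + 4 * (if zz w then 1 else 0) := by
  decide



noncomputable def ee (q : ℝ) (n : ℤ) : ℝ≥0∞ := ENNReal.ofReal (q ^ (n ^ 2))

noncomputable def Wt (q : ℝ) (y : V) : ℝ≥0∞ :=
  ee q y.1 * ee q y.2.1 * ee q y.2.2.1 * ee q y.2.2.2

lemma ee_neg (q : ℝ) (n : ℤ) : ee q (-n) = ee q n := by simp [ee]

lemma Wt_eq (q : ℝ) (hq : 0 < q) (y : V) :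
    Wt q y = ENNReal.ofReal (q ^ (y.1 ^ 2 + y.2.1 ^ 2 + y.2.2.1 ^ 2 + y.2.2.2 ^ 2)) := by
  have hne := hq.ne'
  simp only [Wt, ee]
  rw [← ENNReal.ofReal_mul (by positivity), ← ENNReal.ofReal_mul (by positivity),
    ← ENNReal.ofReal_mul (by positivity), ← zpow_add₀ hne, ← zpow_add₀ hne, ← zpow_add₀ hne]

-- the matrix map
def T1 : V → V := fun y =>
  (y.1 + y.2.1 + y.2.2.1, y.1 - y.2.1 + y.2.2.2, y.1 - y.2.2.1 - y.2.2.2,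
    y.2.1 - y.2.2.1 + y.2.2.2)

def C1 (y : V) : Prop :=
  3 ∣ (y.1 + y.2.1 + y.2.2.1) ∧ 3 ∣ (y.1 - y.2.1 + y.2.2.2) ∧
  3 ∣ (y.1 - y.2.2.1 - y.2.2.2) ∧ 3 ∣ (y.2.1 - y.2.2.1 + y.2.2.2)

instance : DecidablePred C1 := fun y => by unfold C1; infer_instance

lemma T1_inj : Function.Injective T1 := by
  rintro ⟨a, b, c, d⟩ ⟨a', b', c', d'⟩ h
  simp only [T1, Prod.mk.injEq] at h
  obtain ⟨h1, h2, h3, h4⟩ := h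
  refine Prod.ext ?_ (Prod.ext ?_ (Prod.ext ?_ ?_)) <;> simp <;> omega

lemma C1_T1 (x : V) : C1 (T1 x) := by
  obtain ⟨a, b, c, d⟩ := x
  refine ⟨⟨a, by simp [T1]; ring⟩, ⟨b, by simp [T1]; ring⟩,
    ⟨c, by simp [T1]; ring⟩, ⟨d, by simp [T1]; ring⟩⟩

lemma C1_mem_range {y : V} (h : C1 y) : y ∈ Set.range T1 := by
  obtain ⟨a, b, c, d⟩ := y
  unfold C1 at h
  dsimp only at h
  obtain ⟨h1, h2, h3, h4⟩ := h
  refine ⟨((a + b + c) / 3, (a - b + d) / 3, (a - c - d) / 3, (b - c + d) / 3), ?_⟩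
  unfold T1
  dsimp only
  simp only [Prod.mk.injEq]
  refine ⟨?_, ?_, ?_, ?_⟩ <;> omega

lemma Wt_T1 (q : ℝ) (hq : 0 < q) (x : V) : Wt q (T1 x) = Wt (q ^ 3) x := by
  rw [Wt_eq q hq, Wt_eq (q ^ 3) (by positivity)]
  obtain ⟨a, b, c, d⟩ := x
  have hexp : ((a + b + c) ^ 2 + (a - b + d) ^ 2 + (a - c - d) ^ 2 + (b - c + d) ^ 2 : ℤ)
      = 3 * (a ^ 2 + b ^ 2 + c ^ 2 + d ^ 2) := by ring
  simp only [T1]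
  rw [hexp, zpow_mul q 3 _]
  norm_cast


-- sign maps
def s2v : V → V := fun y => (y.1, y.2.1, -y.2.2.1, -y.2.2.2)
def s3v : V → V := fun y => (y.1, -y.2.1, -y.2.2.1, y.2.2.2)
def s4v : V → V := fun y => (y.1, -y.2.1, y.2.2.1, -y.2.2.2)

lemma s2v_invol : Function.Involutive s2v := fun y => by simp [s2v]
lemma s3v_invol : Function.Involutive s3v := fun y => by simp [s3v]
lemma s4v_invol : Function.Involutive s4v := fun y => by simp [s4v]

lemma Wt_s2v (q : ℝ) (y : V) : Wt q (s2v y) = Wt q y := by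
  simp only [Wt, s2v, ee_neg]
lemma Wt_s3v (q : ℝ) (y : V) : Wt q (s3v y) = Wt q y := by
  simp only [Wt, s3v, ee_neg]
lemma Wt_s4v (q : ℝ) (y : V) : Wt q (s4v y) = Wt q y := by
  simp only [Wt, s4v, ee_neg]

noncomputable def Phie (q : ℝ) : ℝ≥0∞ := ∑' n : ℤ, ee q n

lemma Phie_eq {q : ℝ} (hq0 : 0 ≤ q) (hq1 : q < 1) :
    Phie q = ENNReal.ofReal (phi q) := by
  rw [phi, ENNReal.ofReal_tsum_of_nonneg (fun n => by rw [zpow_sq_eq]; positivity)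
    (summable_base hq0 hq1)]
  rfl

lemma Phie_ne_top {q : ℝ} (hq0 : 0 ≤ q) (hq1 : q < 1) : Phie q ≠ ⊤ := by
  rw [Phie_eq hq0 hq1]; exact ENNReal.ofReal_ne_top

-- single variable sums
noncomputable def Bs (q : ℝ) : ℝ≥0∞ := ∑' n : ℤ, (if (3:ℤ) ∣ n then ee q n else 0)
noncomputable def Ds (q : ℝ) : ℝ≥0∞ := ∑' n : ℤ, (if ¬ (3:ℤ) ∣ n then ee q n else 0)

lemma Phie_split (q : ℝ) : Phie q = Ds q + Bs q := by
  rw [Phie, Ds, Bs, ← ENNReal.tsum_add]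
  refine tsum_congr fun n => ?_
  by_cases h : (3:ℤ) ∣ n <;> simp [h]

lemma ee_three_mul (q : ℝ) (hq : 0 < q) (m : ℤ) : ee q (3 * m) = ee (q ^ 9) m := by
  simp only [ee]
  have h : ((3 * m) ^ 2 : ℤ) = 9 * m ^ 2 := by ring
  rw [h, zpow_mul q 9]
  norm_cast

lemma Bs_eq {q : ℝ} (hq : 0 < q) : Bs q = Phie (q ^ 9) := by
  rw [Bs, Phie]
  have hinj : Function.Injective (fun m : ℤ => 3 * m) := fun a b h => by dsimp only at h; omega
  rw [← tsum_of_inj hinj (fun n => if (3:ℤ) ∣ n then ee q n else 0)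
    (fun y hy => by
      by_cases h : (3:ℤ) ∣ y
      · obtain ⟨k, hk⟩ := h; exact ⟨k, hk.symm⟩
      · simp [h] at hy)]
  refine tsum_congr fun m => ?_
  rw [if_pos ⟨m, rfl⟩, ee_three_mul q hq]

-- 4-dim sums
lemma tsum_Wt (q : ℝ) : ∑' y : V, Wt q y = (Phie q) ^ 4 := by
  rw [show (fun y : V => Wt q y) = fun y : V =>
    ee q y.1 * ee q y.2.1 * ee q y.2.2.1 * ee q y.2.2.2 from rfl, tsum_mul4]
  rw [Phie]; ring

lemma tsum_L1 {q : ℝ} (hq0 : 0 < q) :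
    ∑' y : V, (if C1 y then Wt q y else 0) = ∑' y : V, Wt (q ^ 3) y := by
  rw [← tsum_of_inj T1_inj (fun y => if C1 y then Wt q y else 0)
    (fun y hy => by
      by_cases h : C1 y
      · exact C1_mem_range h
      · simp [h] at hy)]
  refine tsum_congr fun x => ?_
  rw [if_pos (C1_T1 x), Wt_T1 q hq0]

lemma tsum_L_sign {q : ℝ} (sv : V → V) (hinv : Function.Involutive sv)
    (hW : ∀ y, Wt q (sv y) = Wt q y) :
    ∑' y : V, (if C1 (sv y) then Wt q y else 0) = ∑' y : V, (if C1 y then Wt q y else 0) := by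
  have h1 : ∀ y, (if C1 (sv y) then Wt q y else 0)
      = (fun z => if C1 z then Wt q z else 0) (sv y) := fun y => by
    dsimp only; rw [hW y]
  rw [tsum_congr h1]
  have h2 := (Function.Involutive.toPerm sv hinv).tsum_eq
    (fun z => if C1 z then Wt q z else 0)
  exact h2

-- casting to ZMod 3
def wc (y : V) : W3 := ((y.1 : Z3), (y.2.1 : Z3), (y.2.2.1 : Z3), (y.2.2.2 : Z3))

lemma dvd_iff_cast (n : ℤ) : (3:ℤ) ∣ n ↔ (n : Z3) = 0 := by
  rw [ZMod.intCast_zmod_eq_zero_iff_dvd n 3]; norm_num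

lemma C1_iff (y : V) : C1 y ↔ c1z (wc y) := by
  obtain ⟨a, b, c, d⟩ := y
  unfold C1 c1z wc
  dsimp only
  rw [dvd_iff_cast, dvd_iff_cast, dvd_iff_cast, dvd_iff_cast]
  push_cast
  tauto

lemma C1_s2_iff (y : V) : C1 (s2v y) ↔ c1z (d2 (wc y)) := by
  obtain ⟨a, b, c, d⟩ := y
  unfold s2v d2
  rw [C1_iff]
  unfold wc
  dsimp only
  push_cast
  tauto

lemma C1_s3_iff (y : V) : C1 (s3v y) ↔ c1z (d3 (wc y)) := by
  obtain ⟨a, b, c, d⟩ := y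
  unfold s3v d3
  rw [C1_iff]
  unfold wc
  dsimp only
  push_cast
  tauto

lemma C1_s4_iff (y : V) : C1 (s4v y) ↔ c1z (d4 (wc y)) := by
  obtain ⟨a, b, c, d⟩ := y
  unfold s4v d4
  rw [C1_iff]
  unfold wc
  dsimp only
  push_cast
  tauto

-- integer-level E and Z conditions
def E1 (y : V) : Prop := (3:ℤ) ∣ y.1 ∧ ¬ (3:ℤ) ∣ y.2.1 ∧ ¬ (3:ℤ) ∣ y.2.2.1 ∧ ¬ (3:ℤ) ∣ y.2.2.2
def E2 (y : V) : Prop := ¬ (3:ℤ) ∣ y.1 ∧ (3:ℤ) ∣ y.2.1 ∧ ¬ (3:ℤ) ∣ y.2.2.1 ∧ ¬ (3:ℤ) ∣ y.2.2.2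
def E3 (y : V) : Prop := ¬ (3:ℤ) ∣ y.1 ∧ ¬ (3:ℤ) ∣ y.2.1 ∧ (3:ℤ) ∣ y.2.2.1 ∧ ¬ (3:ℤ) ∣ y.2.2.2
def E4 (y : V) : Prop := ¬ (3:ℤ) ∣ y.1 ∧ ¬ (3:ℤ) ∣ y.2.1 ∧ ¬ (3:ℤ) ∣ y.2.2.1 ∧ (3:ℤ) ∣ y.2.2.2
def Call (y : V) : Prop := (3:ℤ) ∣ y.1 ∧ (3:ℤ) ∣ y.2.1 ∧ (3:ℤ) ∣ y.2.2.1 ∧ (3:ℤ) ∣ y.2.2.2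

instance : DecidablePred E1 := fun y => by unfold E1; infer_instance
instance : DecidablePred E2 := fun y => by unfold E2; infer_instance
instance : DecidablePred E3 := fun y => by unfold E3; infer_instance
instance : DecidablePred E4 := fun y => by unfold E4; infer_instance
instance : DecidablePred Call := fun y => by unfold Call; infer_instance

lemma E1_iff (y : V) : E1 y ↔ e1z (wc y) := by
  unfold E1 e1z wc; rw [dvd_iff_cast]
  simp only [dvd_iff_cast]
lemma E2_iff (y : V) : E2 y ↔ e2z (wc y) := by
  unfold E2 e2z wc; simp only [dvd_iff_cast]
lemma E3_iff (y : V) : E3 y ↔ e3z (wc y) := by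
  unfold E3 e3z wc; simp only [dvd_iff_cast]
lemma E4_iff (y : V) : E4 y ↔ e4z (wc y) := by
  unfold E4 e4z wc; simp only [dvd_iff_cast]
lemma Call_iff (y : V) : Call y ↔ zz (wc y) := by
  unfold Call zz wc; simp only [dvd_iff_cast]

lemma ite_eq_nat {P Q : Prop} [Decidable P] [Decidable Q] (h : P ↔ Q) (x : ℝ≥0∞) :
    (if P then x else 0) = ((if Q then 1 else 0 : ℕ) : ℝ≥0∞) * x := by
  by_cases hp : P
  · rw [if_pos hp, if_pos (h.mp hp)]; simp
  · rw [if_neg hp, if_neg (fun hq => hp (h.mpr hq))]; simp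

open Classical in
lemma pointwise_master (q : ℝ) (y : V) :
    (if C1 y then Wt q y else 0) + (if C1 (s2v y) then Wt q y else 0)
      + (if C1 (s3v y) then Wt q y else 0) + (if C1 (s4v y) then Wt q y else 0)
    = (if E1 y then Wt q y else 0) + (if E2 y then Wt q y else 0)
      + (if E3 y then Wt q y else 0) + (if E4 y then Wt q y else 0)
      + 4 * (if Call y then Wt q y else 0) := by
  rw [ite_eq_nat (C1_iff y), ite_eq_nat (C1_s2_iff y), ite_eq_nat (C1_s3_iff y),
    ite_eq_nat (C1_s4_iff y), ite_eq_nat (E1_iff y), ite_eq_nat (E2_iff y),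
    ite_eq_nat (E3_iff y), ite_eq_nat (E4_iff y), ite_eq_nat (Call_iff y)]
  have hc := count_lemma (wc y)
  have hcast : (((if c1z (wc y) then 1 else 0) + (if c1z (d2 (wc y)) then 1 else 0)
      + (if c1z (d3 (wc y)) then 1 else 0) + (if c1z (d4 (wc y)) then 1 else 0) : ℕ) : ℝ≥0∞)
      = (((if e1z (wc y) then 1 else 0) + (if e2z (wc y) then 1 else 0)
      + (if e3z (wc y) then 1 else 0) + (if e4z (wc y) then 1 else 0)
      + 4 * (if zz (wc y) then 1 else 0) : ℕ) : ℝ≥0∞) :=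
    congrArg (fun n : ℕ => (n : ℝ≥0∞)) hc
  calc _ = (((if c1z (wc y) then 1 else 0) + (if c1z (d2 (wc y)) then 1 else 0)
      + (if c1z (d3 (wc y)) then 1 else 0) + (if c1z (d4 (wc y)) then 1 else 0) : ℕ) : ℝ≥0∞) * Wt q y := by
        push_cast; ring
    _ = (((if e1z (wc y) then 1 else 0) + (if e2z (wc y) then 1 else 0)
      + (if e3z (wc y) then 1 else 0) + (if e4z (wc y) then 1 else 0)
      + 4 * (if zz (wc y) then 1 else 0) : ℕ) : ℝ≥0∞) * Wt q y := by rw [hcast]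
    _ = _ := by push_cast; ring

lemma tsum_cond_prod (q : ℝ) (P1 P2 P3 P4 : ℤ → Prop) [DecidablePred P1] [DecidablePred P2]
    [DecidablePred P3] [DecidablePred P4] :
    ∑' y : V, (if P1 y.1 ∧ P2 y.2.1 ∧ P3 y.2.2.1 ∧ P4 y.2.2.2 then Wt q y else 0)
    = (∑' n, if P1 n then ee q n else 0) * (∑' n, if P2 n then ee q n else 0)
      * (∑' n, if P3 n then ee q n else 0) * (∑' n, if P4 n then ee q n else 0) := by
  rw [← tsum_mul4]
  refine tsum_congr fun y => ?_
  by_cases h1 : P1 y.1 <;> by_cases h2 : P2 y.2.1 <;> by_cases h3 : P3 y.2.2.1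
    <;> by_cases h4 : P4 y.2.2.2 <;> simp [h1, h2, h3, h4, Wt]

lemma master_e {q : ℝ} (hq0 : 0 < q) :
    4 * Phie (q ^ 3) ^ 4 = 4 * ((Ds q) ^ 3 * Bs q) + 4 * (Bs q) ^ 4 := by
  have key := tsum_congr (L := SummationFilter.unconditional V) (pointwise_master q)
  rw [ENNReal.tsum_add, ENNReal.tsum_add, ENNReal.tsum_add, ENNReal.tsum_add,
    ENNReal.tsum_add, ENNReal.tsum_add, ENNReal.tsum_add] at key
  rw [tsum_L_sign s2v s2v_invol (Wt_s2v q), tsum_L_sign s3v s3v_invol (Wt_s3v q),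
    tsum_L_sign s4v s4v_invol (Wt_s4v q), tsum_L1 hq0, tsum_Wt] at key
  have hE1 : ∑' y : V, (if E1 y then Wt q y else 0)
      = Bs q * Ds q * Ds q * Ds q := by
    have h := tsum_cond_prod q (fun n => (3:ℤ) ∣ n) (fun n => ¬ (3:ℤ) ∣ n) (fun n => ¬ (3:ℤ) ∣ n) (fun n => ¬ (3:ℤ) ∣ n)
    refine Eq.trans (tsum_congr fun y => if_congr Iff.rfl rfl rfl) (h.trans ?_)
    rfl
  have hE2 : ∑' y : V, (if E2 y then Wt q y else 0)
      = Ds q * Bs q * Ds q * Ds q := by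
    have h := tsum_cond_prod q (fun n => ¬ (3:ℤ) ∣ n) (fun n => (3:ℤ) ∣ n) (fun n => ¬ (3:ℤ) ∣ n) (fun n => ¬ (3:ℤ) ∣ n)
    refine Eq.trans (tsum_congr fun y => if_congr Iff.rfl rfl rfl) (h.trans ?_)
    rfl
  have hE3 : ∑' y : V, (if E3 y then Wt q y else 0)
      = Ds q * Ds q * Bs q * Ds q := by
    have h := tsum_cond_prod q (fun n => ¬ (3:ℤ) ∣ n) (fun n => ¬ (3:ℤ) ∣ n) (fun n => (3:ℤ) ∣ n) (fun n => ¬ (3:ℤ) ∣ n)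
    refine Eq.trans (tsum_congr fun y => if_congr Iff.rfl rfl rfl) (h.trans ?_)
    rfl
  have hE4 : ∑' y : V, (if E4 y then Wt q y else 0)
      = Ds q * Ds q * Ds q * Bs q := by
    have h := tsum_cond_prod q (fun n => ¬ (3:ℤ) ∣ n) (fun n => ¬ (3:ℤ) ∣ n) (fun n => ¬ (3:ℤ) ∣ n) (fun n => (3:ℤ) ∣ n)
    refine Eq.trans (tsum_congr fun y => if_congr Iff.rfl rfl rfl) (h.trans ?_)
    rfl
  have hZ : ∑' y : V, (if Call y then Wt q y else 0)
      = Bs q * Bs q * Bs q * Bs q := by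
    have h := tsum_cond_prod q (fun n => (3:ℤ) ∣ n) (fun n => (3:ℤ) ∣ n) (fun n => (3:ℤ) ∣ n) (fun n => (3:ℤ) ∣ n)
    refine Eq.trans (tsum_congr fun y => if_congr Iff.rfl rfl rfl) (h.trans ?_)
    rfl
  have h4Z : ∑' y : V, 4 * (if Call y then Wt q y else 0)
      = 4 * (Bs q * Bs q * Bs q * Bs q) := by rw [ENNReal.tsum_mul_left, hZ]
  rw [hE1, hE2, hE3, hE4, h4Z] at key
  calc 4 * Phie (q ^ 3) ^ 4
      = Phie (q ^ 3) ^ 4 + Phie (q ^ 3) ^ 4 + Phie (q ^ 3) ^ 4 + Phie (q ^ 3) ^ 4 := by ring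
    _ = Bs q * Ds q * Ds q * Ds q + Ds q * Bs q * Ds q * Ds q + Ds q * Ds q * Bs q * Ds q
        + Ds q * Ds q * Ds q * Bs q + 4 * (Bs q * Bs q * Bs q * Bs q) := key
    _ = 4 * ((Ds q) ^ 3 * Bs q) + 4 * (Bs q) ^ 4 := by ring

theorem theta_identity {q : ℝ} (hq0 : 0 < q) (hq1 : q < 1) :
    (phi (q ^ 3)) ^ 4 = (phi q - phi (q ^ 9)) ^ 3 * phi (q ^ 9) + (phi (q ^ 9)) ^ 4 := by
  have h30 : (0:ℝ) < q ^ 3 := by positivity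
  have h31 : q ^ 3 < 1 := pow_lt_one₀ hq0.le hq1 (by norm_num)
  have h90 : (0:ℝ) < q ^ 9 := by positivity
  have h91 : q ^ 9 < 1 := pow_lt_one₀ hq0.le hq1 (by norm_num)
  have hB : Bs q = ENNReal.ofReal (phi (q ^ 9)) := by
    rw [Bs_eq hq0, Phie_eq h90.le h91]
  have hD_ne : Ds q ≠ ⊤ := by
    intro h
    refine Phie_ne_top hq0.le hq1 ?_
    rw [Phie_split q, h, top_add]
  have hDr : (Ds q).toReal = phi q - phi (q ^ 9) := by
    have h := congrArg ENNReal.toReal (Phie_split q)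
    rw [Phie_eq hq0.le hq1, ENNReal.toReal_ofReal (phi_nonneg hq0.le),
      ENNReal.toReal_add hD_ne (by rw [hB]; exact ENNReal.ofReal_ne_top), hB,
      ENNReal.toReal_ofReal (phi_nonneg h90.le)] at h
    linarith
  have hM := congrArg ENNReal.toReal (master_e hq0)
  rw [Phie_eq h30.le h31, hB] at hM
  have hfin1 : (4 : ℝ≥0∞) * ((Ds q) ^ 3 * ENNReal.ofReal (phi (q ^ 9))) ≠ ⊤ :=
    ENNReal.mul_ne_top (by simp)
      (ENNReal.mul_ne_top (ENNReal.pow_ne_top hD_ne) ENNReal.ofReal_ne_top)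
  have hfin2 : (4 : ℝ≥0∞) * (ENNReal.ofReal (phi (q ^ 9))) ^ 4 ≠ ⊤ :=
    ENNReal.mul_ne_top (by simp) (ENNReal.pow_ne_top ENNReal.ofReal_ne_top)
  rw [ENNReal.toReal_add hfin1 hfin2] at hM
  simp only [ENNReal.toReal_mul, ENNReal.toReal_pow, ENNReal.toReal_ofNat,
    ENNReal.toReal_ofReal (phi_nonneg h30.le), ENNReal.toReal_ofReal (phi_nonneg h90.le),
    hDr] at hM
  linarith

open Complex in
lemma jacobi_phi {t : ℝ} (ht : 0 < t) :
    jacobiTheta ((t:ℂ) * Complex.I) = (phi (Real.exp (-π * t)) : ℂ) := by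
  rw [jacobiTheta, phi, Complex.ofReal_tsum]
  refine tsum_congr fun n => ?_
  rw [zpow_sq_eq, ← Real.exp_nat_mul]
  have h2 : ((n.natAbs ^ 2 : ℕ) : ℝ) = ((n : ℝ)) ^ 2 := by
    push_cast [Nat.cast_natAbs, Int.cast_abs]
    exact sq_abs _
  have harg : (π:ℂ) * Complex.I * (n:ℂ) ^ 2 * ((t:ℂ) * Complex.I)
      = (((n.natAbs ^ 2 : ℕ) : ℝ) * (-π * t) : ℝ) := by
    calc (π:ℂ) * Complex.I * (n:ℂ) ^ 2 * ((t:ℂ) * Complex.I)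
        = ((π * t * ((n:ℝ)) ^ 2 : ℝ) : ℂ) * (Complex.I * Complex.I) := by push_cast; ring
      _ = _ := by rw [Complex.I_mul_I]; push_cast [h2]; ring
  rw [harg, Complex.ofReal_exp]

lemma modular_third : phi (Real.exp (-π / 3)) = Real.sqrt 3 * phi (Real.exp (-(3:ℝ) * π)) := by
  have h13 : (0:ℝ) < 1/3 := by norm_num
  set τ : UpperHalfPlane := ⟨((1/3 : ℝ) : ℂ) * Complex.I, by
    simp [Complex.mul_I_im]⟩ with hτ
  have hS := jacobiTheta_S_smul τ
  have hcoe : ((ModularGroup.S • τ : UpperHalfPlane) : ℂ) = ((3:ℝ):ℂ) * Complex.I := by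
    rw [UpperHalfPlane.modular_S_smul, UpperHalfPlane.coe_mk]
    have : (τ : ℂ) = ((1/3 : ℝ) : ℂ) * Complex.I := rfl
    rw [this]
    have hmul : (((3:ℝ):ℂ) * Complex.I) * (-(((1/3:ℝ):ℂ) * Complex.I)) = 1 := by
      have h' : (((3:ℝ):ℂ) * Complex.I) * (-(((1/3:ℝ):ℂ) * Complex.I))
          = -(Complex.I * Complex.I) := by push_cast; ring
      rw [h', Complex.I_mul_I]; ring
    exact inv_eq_of_mul_eq_one_left hmul
  have hfac : (-Complex.I * (τ : ℂ)) = (((1/3 : ℝ)) : ℂ) := by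
    have : (τ : ℂ) = ((1/3 : ℝ) : ℂ) * Complex.I := rfl
    rw [this]
    calc -Complex.I * (((1/3 : ℝ) : ℂ) * Complex.I)
        = ((1/3 : ℝ) : ℂ) * (-(Complex.I * Complex.I)) := by ring
      _ = _ := by rw [Complex.I_mul_I]; ring
  have hpow : ((-Complex.I * (τ : ℂ)) ^ ((1:ℂ)/2)) = ((Real.sqrt (1/3) : ℝ) : ℂ) := by
    rw [hfac]
    have h12 : ((1:ℂ)/2) = (((1/2 : ℝ)) : ℂ) := by norm_num
    rw [h12, ← Complex.ofReal_cpow (by norm_num : (0:ℝ) ≤ 1/3) (1/2)]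
    rw [Real.sqrt_eq_rpow]
  have hτc : (τ : ℂ) = ((1/3 : ℝ) : ℂ) * Complex.I := rfl
  rw [hcoe, hτc] at hS
  rw [jacobi_phi (by norm_num : (0:ℝ) < 3), jacobi_phi h13] at hS
  rw [show (-Complex.I * (((1/3:ℝ):ℂ) * Complex.I)) ^ ((1:ℂ)/2)
      = ((Real.sqrt (1/3) : ℝ) : ℂ) from by rw [← hτc]; exact hpow] at hS
  have hreal : phi (Real.exp (-π * 3)) = Real.sqrt (1/3) * phi (Real.exp (-π * (1/3))) := by
    exact_mod_cast hS
  have hsqrt : Real.sqrt (1/3) = (Real.sqrt 3)⁻¹ := by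
    rw [one_div, Real.sqrt_inv]
  have hs3 : (0:ℝ) < Real.sqrt 3 := Real.sqrt_pos.mpr (by norm_num)
  have e1 : Real.exp (-π * 3) = Real.exp (-(3:ℝ) * π) := by ring_nf
  have e2 : Real.exp (-π * (1/3)) = Real.exp (-π / 3) := by ring_nf
  rw [e1, e2, hsqrt] at hreal
  field_simp at hreal ⊢
  linarith

end Rama

open Rama in
theorem stmt_9 :
    phi (Real.exp (-9 * π)) / phi (Real.exp (-π)) =
      (1 + (2 * (Real.sqrt 3 + 1)) ^ ((1 : ℝ) / 3)) / 3 := by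
  have hπ : 0 < π := Real.pi_pos
  set s := Real.sqrt 3 with hs
  have hs0 : 0 < s := Real.sqrt_pos.mpr (by norm_num)
  have hs2 : s ^ 2 = 3 := Real.sq_sqrt (by norm_num)
  set K := (2 * (s + 1)) ^ ((1 : ℝ) / 3) with hK
  have hK3 : K ^ (3 : ℕ) = 2 * (s + 1) := by
    rw [hK, ← Real.rpow_natCast ((2 * (s + 1)) ^ ((1:ℝ)/3)) 3,
      ← Real.rpow_mul (by positivity)]
    norm_num
  have he1 : (0:ℝ) < Real.exp (-π) := Real.exp_pos _
  have he1' : Real.exp (-π) < 1 := Real.exp_lt_one_iff.mpr (by linarith)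
  have he3 : (0:ℝ) < Real.exp (-π/3) := Real.exp_pos _
  have he3' : Real.exp (-π/3) < 1 := Real.exp_lt_one_iff.mpr (by linarith)
  set a := phi (Real.exp (-π)) with ha
  set b := phi (Real.exp (-(3:ℝ) * π)) with hb
  set c := phi (Real.exp (-9 * π)) with hc
  have ha0 : 0 < a := phi_pos he1.le he1'
  -- instance 1
  have i1 := theta_identity he1 he1'
  have p3 : Real.exp (-π) ^ (3:ℕ) = Real.exp (-(3:ℝ) * π) := by
    rw [← Real.exp_nat_mul]; congr 1; push_cast; ring
  have p9 : Real.exp (-π) ^ (9:ℕ) = Real.exp (-9 * π) := by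
    rw [← Real.exp_nat_mul]; congr 1; push_cast; ring
  rw [p3, p9] at i1
  -- instance 2
  have i2 := theta_identity he3 he3'
  have p3' : Real.exp (-π/3) ^ (3:ℕ) = Real.exp (-π) := by
    rw [← Real.exp_nat_mul]; congr 1; push_cast; ring
  have p9' : Real.exp (-π/3) ^ (9:ℕ) = Real.exp (-(3:ℝ) * π) := by
    rw [← Real.exp_nat_mul]; congr 1; push_cast; ring
  rw [p3', p9', modular_third] at i2
  -- i2 : a^4 = (s * b - b)^3 * b + b^4
  have comb : a ^ 4 = (6*s - 9) * ((a - c) ^ 3 * c + c ^ 4) := by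
    have e2 : a ^ 4 = ((s - 1) ^ 3 + 1) * b ^ 4 := by linear_combination i2
    have e3 : (s - 1) ^ 3 + 1 = 6 * s - 9 := by linear_combination (s - 3) * hs2
    rw [e3] at e2
    rw [e2, i1]
  have key : a * (27 * (3*c - a) ^ 3 - (54*s + 54) * a ^ 3) = 0 := by
    linear_combination (-9*(6*s + 9)) * comb + (-36*a*(3*c - a)^3 - 36*a^4) * hs2
  have h27 : 27 * (3*c - a) ^ 3 = (54*s + 54) * a ^ 3 := by
    rcases mul_eq_zero.mp key with h | h
    · exact absurd h ha0.ne'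
    · linarith
  have hcube : (3*c - a) ^ 3 = (K * a) ^ 3 := by
    rw [mul_pow, hK3]; linarith
  have hlin : 3*c - a = K * a :=
    (Odd.strictMono_pow (R := ℝ) (⟨1, by norm_num⟩ : Odd 3)).injective hcube
  rw [div_eq_iff ha0.ne']
  linarith
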